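/- arXiv:1211.1714 — 2 statements merged into one kernel-verified Lean document; each statement's English description precedes it below -/
import Mathlib

section
/- Every circuit in P_10^k (k ≥ 1) is vertex-disjoint from at least one of the ten canonical disjoint copies of P^{k−1} contained in P_10^k. -/
open SimpleGraph

/-- Degree of a vertex, via the cardinality of its neighbor set. -/
noncomputable def hdeg {V : Type*} (G : SimpleGraph V) (v : V) : ℕ :=
  {w | G.Adj v w}.ncard

/-- A cubic graph: every vertex has degree 3. -/
def IsCubic {V : Type*} (G : SimpleGraph V) : Prop := ∀ v, hdeg G v = 3

/-- A 2-connected graph: at least 3 vertices and deleting any vertex leaves it connected. -/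
def TwoConnected {V : Type*} (G : SimpleGraph V) : Prop :=
  3 ≤ Nat.card V ∧ ∀ v : V, (G.induce {v}ᶜ).Connected

/-- A 3-connected graph: at least 4 vertices and deleting any two vertices leaves it connected. -/
def ThreeConnected {V : Type*} (G : SimpleGraph V) : Prop :=
  4 ≤ Nat.card V ∧ ∀ v w : V, v ≠ w → (G.induce ({v, w} : Set V)ᶜ).Connected

/-- Edge list of the Petersen graph on `Fin 10` (vertex 9 has neighbors 4, 6, 7). -/
def petEdges : List (Fin 10 × Fin 10) :=
  [(0,1),(1,2),(2,3),(3,4),(4,0),(0,5),(1,6),(2,7),(3,8),(4,9),(5,7),(7,9),(9,6),(6,8),(8,5)]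

/-- The Petersen graph `P₁₀`. -/
def Pet : SimpleGraph (Fin 10) := SimpleGraph.fromRel (fun a b => (a, b) ∈ petEdges)

/-- Edge list of `P = P₁₀ - z` on `Fin 9` (where `z` was vertex 9);
its three 2-valent vertices are 4, 6, 7. -/
def pEdges : List (Fin 9 × Fin 9) :=
  [(0,1),(1,2),(2,3),(3,4),(4,0),(0,5),(1,6),(2,7),(3,8),(5,7),(6,8),(8,5)]

/-- The graph `P = P₁₀ - z`, the Petersen graph minus one vertex. -/
def Pgr : SimpleGraph (Fin 9) := SimpleGraph.fromRel (fun a b => (a, b) ∈ pEdges)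

/-- The three 2-valent vertices of `P` (as targets of the port assignment). -/
def portIdx : ℕ → Fin 9
  | 0 => 4
  | 1 => 6
  | _ => 7

/-- Port assignment: to which 2-valent vertex of the copy of `P` replacing `u` the
neighbor `v` of `u` gets attached (neighbors are ordered by the injective encoding `enc`). -/
noncomputable def port {V : Type*} (G : SimpleGraph V) (enc : V → ℕ) (u v : V) : Fin 9 :=
  portIdx (Nat.card {w : V | G.Adj u w ∧ enc w < enc v})

/-- Simultaneous `P`-inflation at every vertex of `G`. -/
noncomputable def inflate {V : Type*} (G : SimpleGraph V) (enc : V → ℕ) :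
    SimpleGraph (V × Fin 9) where
  Adj a b :=
    (a.1 = b.1 ∧ Pgr.Adj a.2 b.2) ∨
    (G.Adj a.1 b.1 ∧ a.2 = port G enc a.1 b.1 ∧ b.2 = port G enc b.1 a.1)
  symm := by
    constructor
    rintro a b (⟨h1, h2⟩ | ⟨h1, h2, h3⟩)
    · exact Or.inl ⟨h1.symm, h2.symm⟩
    · exact Or.inr ⟨h1.symm, h3, h2⟩
  loopless := by
    constructor
    rintro a (⟨-, h⟩ | ⟨h, -, -⟩)
    · exact Pgr.loopless.irrefl _ h
    · exact G.loopless.irrefl _ h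

/-- A graph bundled with an injective-style encoding of its vertices into `ℕ`. -/
structure GE where
  V : Type
  G : SimpleGraph V
  enc : V → ℕ

/-- One round of simultaneous `P`-inflation. -/
noncomputable def step (A : GE) : GE :=
  ⟨A.V × Fin 9, inflate A.G A.enc, fun p => Nat.pair (A.enc p.1) p.2.val⟩

/-- The iterated Petersen graph `P₁₀ᵏ`. -/
noncomputable def ItP10 : ℕ → GE
  | 0 => ⟨Fin 10, Pet, Fin.val⟩
  | k + 1 => step (ItP10 k)

/-- The iterated graph `Pᵏ` (starting from `P = P₁₀ - z`). -/
noncomputable def ItP : ℕ → GE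
  | 0 => ⟨Fin 9, Pgr, Fin.val⟩
  | k + 1 => step (ItP k)

/-- The canonical copy of `P^{k-1}` in `P₁₀ᵏ` containing a given vertex,
recorded by the corresponding vertex of `P₁₀`. -/
noncomputable def baseOf : (k : ℕ) → (ItP10 k).V → Fin 10
  | 0 => id
  | k + 1 => fun p => baseOf k p.1

/-- The parameter `l(G)`: minimum over circuits `C` of the maximum over vertices `v`
of the distance `d(C, v)`. -/
noncomputable def ell {V : Type*} (G : SimpleGraph V) : ℕ :=
  sInf { n | ∃ (v : V) (w : G.Walk v v), w.IsCycle ∧ ∀ u : V, ∃ x ∈ w.support, G.dist x u ≤ n }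

/-- `M` is a matching of `G`: a set of edges of `G`, pairwise not sharing a vertex. -/
def IsMatchingSet {V : Type*} (G : SimpleGraph V) (M : Set (Sym2 V)) : Prop :=
  M ⊆ G.edgeSet ∧ ∀ e ∈ M, ∀ f ∈ M, e ≠ f → ∀ v : V, ¬(v ∈ e ∧ v ∈ f)

/-- Every connected component of `H` has an even number of vertices. -/
def EvenComponents {V : Type*} (H : SimpleGraph V) : Prop :=
  ∀ c : H.ConnectedComponent, Even c.supp.ncard

/-- An `f`-matching: a matching `M` such that every component of `G - M` is
2-connected and has an even number of vertices. -/
def IsFMatching {V : Type*} (G : SimpleGraph V) (M : Set (Sym2 V)) : Prop :=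
  IsMatchingSet G M ∧
    ∀ c : (G.deleteEdges M).ConnectedComponent,
      TwoConnected ((G.deleteEdges M).induce c.supp) ∧ Even c.supp.ncard

/-- A minimal edge cut of `G`: deleting it disconnects `G`, but deleting any
proper subset does not. -/
def IsMinEdgeCut {V : Type*} (G : SimpleGraph V) (E : Set (Sym2 V)) : Prop :=
  E ⊆ G.edgeSet ∧ ¬(G.deleteEdges E).Connected ∧
    ∀ F : Set (Sym2 V), F ⊂ E → (G.deleteEdges F).Connected

/-- `H` is a subdivision of `F`: the vertices of `F` embed into `H` and each edge of `F`
corresponds to a path in `H`, the paths being internally disjoint and covering `H`. -/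
def IsSubdivisionOf {W U : Type*} (H : SimpleGraph W) (F : SimpleGraph U) : Prop :=
  ∃ f : U ↪ W, ∃ p : ∀ u v : U, F.Adj u v → H.Walk (f u) (f v),
    (∀ u v h, (p u v h).IsPath) ∧
    (∀ u v h, ∀ w ∈ (p u v h).support, w ∈ Set.range f → w = f u ∨ w = f v) ∧
    (∀ e : Sym2 W, e ∈ H.edgeSet ↔ ∃ u v h, e ∈ (p u v h).edges) ∧
    (∀ w : W, w ∈ Set.range f ∨ ∃ u v h, w ∈ (p u v h).support) ∧
    (∀ u v h u' v' h', ∀ w : W,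
      w ∈ (p u v h).support → w ∈ (p u' v' h').support →
      w ∈ Set.range f ∨ (u = u' ∧ v = v') ∨ (u = v' ∧ v = u'))

/-- Each component of `F` is an even circuit or a 2-connected cubic graph. -/
def GoodFrameComponents {U : Type*} (F : SimpleGraph U) : Prop :=
  ∀ c : F.ConnectedComponent,
    ((F.induce c.supp).Connected ∧ (∀ v, hdeg (F.induce c.supp) v = 2) ∧ Even c.supp.ncard) ∨
    (TwoConnected (F.induce c.supp) ∧ IsCubic (F.induce c.supp))

/-- `F` is a frame of `G`. -/
def IsFrame {U V : Type*} (F : SimpleGraph U) (G : SimpleGraph V) : Prop :=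
  GoodFrameComponents F ∧
    ∃ H : SimpleGraph V, H ≤ G ∧ IsSubdivisionOf H F ∧ EvenComponents H

/-- A proper 3-edge-coloring of `G`. -/
def ProperEdgeColoring {V : Type*} (G : SimpleGraph V) (f : Sym2 V → Fin 3) : Prop :=
  ∀ u v w : V, G.Adj u v → G.Adj u w → v ≠ w → f s(u, v) ≠ f s(u, w)

/-- The spanning subgraph of edges whose color is different from `c`
(i.e. the union of the other two color classes). -/
def twoClassSub {V : Type*} (G : SimpleGraph V) (f : Sym2 V → Fin 3) (c : Fin 3) :
    SimpleGraph V where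
  Adj u v := G.Adj u v ∧ f s(u, v) ≠ c
  symm := by
    constructor
    rintro u v ⟨h1, h2⟩
    exact ⟨h1.symm, by rwa [Sym2.eq_swap]⟩
  loopless := ⟨fun v h => G.loopless.irrefl v h.1⟩

/-- A Kotzig graph: a cubic graph with a proper 3-edge-coloring in which any two
color classes form a hamiltonian circuit. -/
def IsKotzig {V : Type*} (G : SimpleGraph V) : Prop :=
  IsCubic G ∧ ∃ f : Sym2 V → Fin 3, ProperEdgeColoring G f ∧
    ∀ c : Fin 3, (twoClassSub G f c).Connected ∧ ∀ v, hdeg (twoClassSub G f c) v = 2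

/-- The family `Fam` is an even subdivision-factor of `G`. -/
def IsEvenSubdivFactor {ι : Type*} (Fam : ι → Σ n : ℕ, SimpleGraph (Fin n))
    {V : Type*} (G : SimpleGraph V) : Prop :=
  ∃ H : SimpleGraph V, H ≤ G ∧ ∀ c : H.ConnectedComponent,
    Even c.supp.ncard ∧ ∃ i, IsSubdivisionOf (H.induce c.supp) (Fam i).2

instance decPetAdj : DecidableRel Pet.Adj := fun a b =>
  decidable_of_iff (a ≠ b ∧ ((a, b) ∈ petEdges ∨ (b, a) ∈ petEdges))
    (by rw [Pet, SimpleGraph.fromRel_adj])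

/-- neighbor table of the Petersen graph -/
def nbrs (a : Fin 10) : List (Fin 10) :=
  match a.val with
  | 0 => [1, 4, 5]
  | 1 => [0, 2, 6]
  | 2 => [1, 3, 7]
  | 3 => [2, 4, 8]
  | 4 => [3, 0, 9]
  | 5 => [0, 7, 8]
  | 6 => [1, 9, 8]
  | 7 => [2, 5, 9]
  | 8 => [3, 6, 5]
  | _ => [4, 7, 6]

lemma mem_nbrs : ∀ a b : Fin 10, Pet.Adj a b ↔ b ∈ nbrs a := by decide

/-- DFS for a hamiltonian circuit of the Petersen graph: the list is the reversed
path so far, `start` the start vertex, the fuel counts vertices still to add. -/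
def grow : ℕ → Fin 10 → List (Fin 10) → Bool
  | 0, start, l => (nbrs l.head!).contains start
  | fuel + 1, start, l =>
      (nbrs l.head!).any fun b => !(l.contains b) && grow fuel start (b :: l)

lemma grow_sound : ∀ (rest : List (Fin 10)) (start cur : Fin 10) (seen : List (Fin 10)),
    List.Chain' Pet.Adj (cur :: rest) →
    Pet.Adj ((cur :: rest).getLast (by simp)) start →
    (∀ b ∈ rest, b ∉ (cur :: seen)) → rest.Nodup →
    grow rest.length start (cur :: seen) = true
  | [], start, cur, seen, _, hadj, _, _ => by
    simp only [List.getLast_singleton] at hadj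
    rw [List.length_nil, grow, List.head!_cons]
    exact List.elem_eq_true_of_mem ((mem_nbrs cur start).1 hadj)
  | b :: rest', start, cur, seen, hchain, hadj, hnotin, hnd => by
    rw [List.length_cons, grow, List.head!_cons]
    rw [List.any_eq_true]
    have h1 : Pet.Adj cur b := (List.isChain_cons_cons.1 hchain).1
    refine ⟨b, (mem_nbrs cur b).1 h1, ?_⟩
    have h2 : ((cur :: seen).contains b) = false := by
      have := hnotin b List.mem_cons_self
      simpa [List.elem_iff] using this
    have h3 : grow rest'.length start (b :: cur :: seen) = true := by
      apply grow_sound rest' start b (cur :: seen) (List.isChain_cons_cons.1 hchain).2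
      · have hgl : (cur :: b :: rest').getLast (by simp) = (b :: rest').getLast (by simp) :=
          List.getLast_cons (by simp)
        rw [hgl] at hadj
        exact hadj
      · intro x hx
        have hxc := hnotin x (List.mem_cons_of_mem b hx)
        simp only [List.mem_cons] at hxc ⊢
        push_neg at hxc ⊢
        refine ⟨fun hxb => (List.nodup_cons.1 hnd).1 (hxb ▸ hx), hxc.1, hxc.2⟩
      · exact (List.nodup_cons.1 hnd).2
    rw [Bool.and_eq_true]
    refine ⟨?_, h3⟩
    simp only [Bool.not_eq_true']
    rw [← h2]

set_option maxHeartbeats 4000000 in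
lemma grow_false : ∀ x : Fin 10, grow 9 x [x] = false := by decide

/-- The Petersen graph has no hamiltonian circuit (in cyclic-list form). -/
lemma pet_not_ham (l : List (Fin 10)) (hlen : l.length = 10) (hnd : l.Nodup)
    (hch : List.Chain' Pet.Adj l) (hne : l ≠ [])
    (hclose : Pet.Adj (l.getLast hne) (l.head hne)) : False := by
  obtain ⟨a, rest, rfl⟩ : ∃ a rest, l = a :: rest := by
    cases l with
    | nil => exact absurd rfl hne
    | cons a rest => exact ⟨a, rest, rfl⟩
  have hrl : rest.length = 9 := by simpa using hlen
  have hsound := grow_sound rest a a [] hch (by simpa using hclose)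
    (fun b hb => by
      simp only [List.mem_cons, List.not_mem_nil, or_false]
      intro hba
      exact (List.nodup_cons.1 hnd).1 (hba ▸ hb))
    (List.nodup_cons.1 hnd).2
  rw [hrl, grow_false a] at hsound
  exact absurd hsound (by simp)


section WalkLemmas
variable {V : Type*} {γ : Type*} [DecidableEq γ] {G : SimpleGraph V}

lemma parity_darts (f : V → Bool) :
    ∀ {u v : V} (w : G.Walk u v),
      Even (w.darts.countP (fun d => f d.toProd.1 != f d.toProd.2)) ↔ f u = f v
  | u, _, Walk.nil => by simp
  | u, v, @Walk.cons _ _ _ x _ h p => by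
    rw [Walk.darts_cons, List.countP_cons]
    have ih := parity_darts f p
    by_cases he : f u = f x
    · simp only [Dart.toProd, he, bne_self_eq_false]
      simpa [he] using ih
    · have hb : (f u != f x) = true := by simpa using he
      simp only [Dart.toProd, hb, if_pos]
      rw [Nat.even_add_one, ih]
      revert he; cases f u <;> cases f x <;> cases f v <;> simp

lemma exists_change (f : V → Bool) :
    ∀ {u v x : V} (w : G.Walk u v), x ∈ w.support → f x ≠ f u →
      ∃ d ∈ w.darts, f d.toProd.1 ≠ f d.toProd.2
  | u, _, x, Walk.nil, hx, hfx => by simp at hx; simp [hx] at hfx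
  | u, v, x, @Walk.cons _ _ _ b _ h p, hx, hfx => by
    by_cases he : f u = f b
    · rw [Walk.support_cons] at hx
      rcases List.mem_cons.1 hx with rfl | hx
      · exact absurd rfl hfx
      · obtain ⟨d, hd, hne⟩ := exists_change f p hx (by rw [← he]; exact hfx)
        exact ⟨d, by simp [Walk.darts_cons, hd], hne⟩
    · exact ⟨⟨(u, b), h⟩, by simp [Walk.darts_cons], he⟩

lemma destutter'_head? (a : γ) : ∀ (l : List γ), (l.destutter' (· ≠ ·) a).head? = some a
  | [] => rfl
  | b :: l => by
    rw [List.destutter'_cons]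
    split
    · rfl
    · exact destutter'_head? a l

variable (π : V → γ)

lemma dWalk_head? {u v : V} (w : G.Walk u v) :
    ((w.support.map π).destutter (· ≠ ·)).head? = some (π u) := by
  rw [w.support_eq_cons]
  simp only [List.map_cons, List.destutter_cons']
  exact destutter'_head? (π u) _

lemma dWalk_ne_nil {u v : V} (w : G.Walk u v) :
    (w.support.map π).destutter (· ≠ ·) ≠ [] := by
  rw [w.support_eq_cons]
  simp only [List.map_cons, List.destutter_cons']
  apply List.destutter'_ne_nil

lemma cons_reduce {u x v : V} (h : G.Adj u x) (p : G.Walk x v) :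
    ((Walk.cons h p).support.map π).destutter (· ≠ ·) =
      if π u ≠ π x then π u :: ((p.support.map π).destutter (· ≠ ·))
      else (p.support.map π).destutter (· ≠ ·) := by
  conv_rhs => rw [p.support_eq_cons]
  rw [Walk.support_cons, p.support_eq_cons]
  simp only [List.map_cons, List.destutter_cons', List.destutter'_cons]
  split_ifs with h1
  · simp
  · push_neg at h1
    rw [h1]
    simp

lemma dWalk_length : ∀ {u v : V} (w : G.Walk u v),
    ((w.support.map π).destutter (· ≠ ·)).length
      = 1 + w.darts.countP (fun d => decide (π d.toProd.1 ≠ π d.toProd.2))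
  | u, _, Walk.nil => by simp
  | u, v, @Walk.cons _ _ _ x _ h p => by
    rw [cons_reduce, Walk.darts_cons, List.countP_cons]
    have ih := dWalk_length (u := x) p
    by_cases he : π u = π x
    · simp [he, ih]
    · rw [if_pos he, List.length_cons, ih]
      simp only [decide_not] at *
      simp [he]
      omega

lemma dWalk_chain' (A : γ → γ → Prop) (hcross : ∀ a b : V, G.Adj a b → π a ≠ π b → A (π a) (π b)) :
    ∀ {u v : V} (w : G.Walk u v), ((w.support.map π).destutter (· ≠ ·)).Chain' A
  | u, _, Walk.nil => by simp; exact List.isChain_singleton _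
  | u, v, @Walk.cons _ _ _ x _ h p => by
    rw [cons_reduce]
    have ih := dWalk_chain' A hcross (u := x) p
    split
    · next hne =>
      apply List.isChain_cons.2
      refine ⟨fun y hy => ?_, ih⟩
      rw [dWalk_head? π p] at hy
      obtain rfl : y = π x := by simpa using hy.symm
      exact hcross u x h hne
    · exact ih

lemma dWalk_getLast? : ∀ {u v : V} (w : G.Walk u v),
    ((w.support.map π).destutter (· ≠ ·)).getLast? = some (π v)
  | u, _, Walk.nil => by simp
  | u, v, @Walk.cons _ _ _ x _ h p => by
    rw [cons_reduce]
    have ih := dWalk_getLast? (u := x) p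
    split
    · rw [List.getLast?_cons, ih]
      simp [Option.or]
    · exact ih

lemma dWalk_mem : ∀ {u v x : V} (w : G.Walk u v), x ∈ w.support →
    π x ∈ (w.support.map π).destutter (· ≠ ·)
  | u, _, x, Walk.nil, hx => by simp at hx; simp [hx]
  | u, v, x, @Walk.cons _ _ _ b _ h p, hx => by
    rw [cons_reduce]
    rw [Walk.support_cons] at hx
    have hd : π b ∈ (p.support.map π).destutter (· ≠ ·) := by
      have h1 := dWalk_head? π p
      have hne := dWalk_ne_nil π p
      rw [List.head?_eq_head hne, Option.some_inj] at h1
      rw [← h1]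
      exact List.head_mem hne
    rcases List.mem_cons.1 hx with rfl | hx
    · split
      · exact List.mem_cons_self
      · next hne => push_neg at hne; rw [hne]; exact hd
    · have := dWalk_mem (u := b) p hx
      split
      · exact List.mem_cons_of_mem _ this
      · exact this

end WalkLemmas


section
variable {α : Type*}

lemma sum_change_indicator (g h : α → Fin 10) (L : List α) :
    ∑ i : Fin 10, L.countP (fun a => decide (g a = i) != decide (h a = i))
      = 2 * L.countP (fun a => decide (g a ≠ h a)) := by
  induction L with
  | nil => simp
  | cons a L ih =>
    simp only [List.countP_cons]
    rw [Finset.sum_add_distrib, ih]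
    by_cases he : g a = h a
    · simp [he]
    · have hterm : ∀ i : Fin 10,
          (if (decide (g a = i) != decide (h a = i)) = true then 1 else 0)
            = (if g a = i then 1 else 0) + (if h a = i then 1 else 0) := by
        intro i
        by_cases h1 : g a = i <;> by_cases h2 : h a = i <;>
          simp [h1, h2] <;> exact absurd (h1.trans h2.symm) he
      rw [Finset.sum_congr rfl (fun i _ => hterm i), Finset.sum_add_distrib]
      have e1 : (∑ i : Fin 10, if g a = i then 1 else 0) = 1 := by
        rw [Finset.sum_ite_eq]
        simp
      have e2 : (∑ i : Fin 10, if h a = i then 1 else 0) = 1 := by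
        rw [Finset.sum_ite_eq]
        simp
      rw [e1, e2]
      simp [he]
      ring

/-- a nodup list inside a finite set is no longer than the set's cardinality -/
lemma nodup_length_le_ncard {l : List α} {S : Set α} (hn : l.Nodup)
    (hsub : ∀ x ∈ l, x ∈ S) (hS : S.Finite) : l.length ≤ S.ncard := by
  classical
  have h1 : l.toFinset.card = l.length := List.toFinset_card_of_nodup hn
  have h2 : l.toFinset ⊆ hS.toFinset := by
    intro x hx
    rw [Set.Finite.mem_toFinset]
    exact hsub x (List.mem_toFinset.1 hx)
  have := Finset.card_le_card h2
  rwa [h1, ← Set.ncard_eq_toFinset_card S hS] at this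
  
lemma nodup_of_length_eq_card [DecidableEq α] {l : List α} (h : l.toFinset.card = l.length) :
    l.Nodup := by
  rw [List.card_toFinset] at h
  have hsub : l.dedup.Sublist l := List.dedup_sublist l
  have := hsub.eq_of_length h
  rw [← this]
  exact List.nodup_dedup l
end


lemma finiteV : ∀ k, Finite (ItP10 k).V
  | 0 => inferInstanceAs (Finite (Fin 10))
  | k + 1 => by
    haveI := finiteV k
    exact inferInstanceAs (Finite ((ItP10 k).V × Fin 9))

lemma baseOf_succ (k : ℕ) (p : (ItP10 (k+1)).V) : baseOf (k+1) p = baseOf k p.1 := rfl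

lemma adj_succ (k : ℕ) (a b : (ItP10 (k+1)).V) :
    (ItP10 (k+1)).G.Adj a b ↔
      ((a.1 = b.1 ∧ Pgr.Adj a.2 b.2) ∨
       ((ItP10 k).G.Adj a.1 b.1 ∧ a.2 = port (ItP10 k).G (ItP10 k).enc a.1 b.1 ∧
        b.2 = port (ItP10 k).G (ItP10 k).enc b.1 a.1)) := Iff.rfl

lemma crossAdj : ∀ (k : ℕ) (a b : (ItP10 k).V), (ItP10 k).G.Adj a b →
    baseOf k a ≠ baseOf k b → Pet.Adj (baseOf k a) (baseOf k b)
  | 0, a, b, h, _ => h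
  | k + 1, a, b, h, hne => by
    rcases (adj_succ k a b).1 h with ⟨h1, -⟩ | ⟨h1, -, -⟩
    · exact absurd (congrArg (baseOf k) h1) hne
    · exact crossAdj k a.1 b.1 h1 hne

/-- cross darts out of fiber `i` -/
def CD (k : ℕ) (i : Fin 10) : Set ((ItP10 k).V × (ItP10 k).V) :=
  {p | (ItP10 k).G.Adj p.1 p.2 ∧ baseOf k p.1 = i ∧ baseOf k p.2 ≠ i}

lemma CD_finite (k : ℕ) (i : Fin 10) : (CD k i).Finite := by
  haveI := finiteV k
  exact Set.toFinite _

lemma CD_card : ∀ (k : ℕ) (i : Fin 10), (CD k i).ncard ≤ 3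
  | 0, i => by
    have h3 : ∀ j : Fin 10,
        ({p : Fin 10 × Fin 10 | Pet.Adj p.1 p.2 ∧ p.1 = j ∧ p.2 ≠ j}).ncard ≤ 3 := by
      intro j
      have hset : {p : Fin 10 × Fin 10 | Pet.Adj p.1 p.2 ∧ p.1 = j ∧ p.2 ≠ j} =
          ↑(Finset.univ.filter
              (fun p : Fin 10 × Fin 10 => Pet.Adj p.1 p.2 ∧ p.1 = j ∧ p.2 ≠ j)) := by
        ext p
        simp
      rw [hset, Set.ncard_coe_finset]
      clear hset
      revert j
      decide
    exact h3 i
  | k + 1, i => by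
    have hmap : ∀ p ∈ CD (k+1) i, (p.1.1, p.2.1) ∈ CD k i := by
      rintro ⟨a, b⟩ ⟨hadj, hb1, hb2⟩
      rcases (adj_succ k a b).1 hadj with ⟨h1, -⟩ | ⟨h1, -, -⟩
      · refine absurd ?_ hb2
        show baseOf k b.1 = i
        rw [← h1]
        exact hb1
      · exact ⟨h1, hb1, hb2⟩
    have hinj : Set.InjOn (fun p : (ItP10 (k+1)).V × (ItP10 (k+1)).V => (p.1.1, p.2.1))
        (CD (k+1) i) := by
      rintro ⟨a, b⟩ ⟨ha, hb1, hb2⟩ ⟨a', b'⟩ ⟨ha', hb1', hb2'⟩ heq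
      simp only [Prod.mk.injEq] at heq
      obtain ⟨h11, h21⟩ := heq
      have hports : ∀ (x y : (ItP10 (k+1)).V), (ItP10 (k+1)).G.Adj x y →
          baseOf (k+1) x ≠ baseOf (k+1) y →
          x.2 = port (ItP10 k).G (ItP10 k).enc x.1 y.1 ∧
          y.2 = port (ItP10 k).G (ItP10 k).enc y.1 x.1 := by
        intro x y hxy hnexy
        rcases (adj_succ k x y).1 hxy with ⟨h1, -⟩ | ⟨-, h2, h3⟩
        · exact absurd (congrArg (baseOf k) h1) hnexy
        · exact ⟨h2, h3⟩
      have hne : baseOf (k+1) a ≠ baseOf (k+1) b := fun hh => hb2 (hh ▸ hb1)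
      have hne' : baseOf (k+1) a' ≠ baseOf (k+1) b' := fun hh => hb2' (hh ▸ hb1')
      obtain ⟨p1, p2⟩ := hports a b ha hne
      obtain ⟨p1', p2'⟩ := hports a' b' ha' hne'
      have : a.2 = a'.2 := by rw [p1, p1', h11, h21]
      have hbb : b.2 = b'.2 := by rw [p2, p2', h11, h21]
      exact Prod.ext (Prod.ext h11 this) (Prod.ext h21 hbb)
    calc (CD (k+1) i).ncard ≤ (CD k i).ncard :=
          Set.ncard_le_ncard_of_injOn _ hmap hinj (CD_finite k i)
      _ ≤ 3 := CD_card k i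


/-- every circuit of `P₁₀ᵏ` (`k ≥ 1`) is vertex-disjoint from at least
one of the ten canonical copies of `P^{k-1}` (the copies being the fibers of `baseOf`). -/
theorem stmt_8 (k : ℕ) (hk : 1 ≤ k) (v : (ItP10 k).V) (w : (ItP10 k).G.Walk v v)
    (hw : w.IsCycle) : ∃ i : Fin 10, ∀ x ∈ w.support, baseOf k x ≠ i := by
  classical
  by_contra hcon
  push_neg at hcon
  haveI := finiteV k
  set π : (ItP10 k).V → Fin 10 := baseOf k with hπ
  -- each fiber is crossed exactly twice
  have hcount2 : ∀ i : Fin 10,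
      w.darts.countP
        (fun d => decide (π d.toProd.1 = i) != decide (π d.toProd.2 = i)) = 2 := by
    intro i
    have heven : Even (w.darts.countP
        (fun d => decide (π d.toProd.1 = i) != decide (π d.toProd.2 = i))) :=
      (parity_darts (fun x => decide (π x = i)) w).2 rfl
    have hpos : 0 < w.darts.countP
        (fun d => decide (π d.toProd.1 = i) != decide (π d.toProd.2 = i)) := by
      obtain ⟨x, hxs, hxi⟩ := hcon i
      have hji : ∃ j : Fin 10, j ≠ i := by
        by_cases h0 : i = 0
        · exact ⟨1, by rw [h0]; decide⟩
        · exact ⟨0, fun h => h0 h.symm⟩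
      obtain ⟨j, hji⟩ := hji
      obtain ⟨y, hys, hyj⟩ := hcon j
      have hfx : decide (π x = i) = true := by simp [hxi]
      have hfy : decide (π y = i) = false := by
        simp only [decide_eq_false_iff_not]
        rw [hyj]
        exact hji
      have hex : ∃ d ∈ w.darts,
          (fun x => decide (π x = i)) d.toProd.1 ≠ (fun x => decide (π x = i)) d.toProd.2 := by
        by_cases hv : decide (π v = i) = true
        · exact exists_change (fun x => decide (π x = i)) w hys (by show decide (π y = i) ≠ decide (π v = i); rw [hfy, hv]; simp)
        · rw [Bool.not_eq_true] at hv
          exact exists_change (fun x => decide (π x = i)) w hxs (by show decide (π x = i) ≠ decide (π v = i); rw [hfx, hv]; simp)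
      obtain ⟨d0, hd0, hne0⟩ := hex
      rw [List.countP_pos_iff]
      exact ⟨d0, hd0, bne_iff_ne.mpr hne0⟩
    have hle : w.darts.countP
        (fun d => decide (π d.toProd.1 = i) != decide (π d.toProd.2 = i)) ≤ 3 := by
      set fe : Sym2 (ItP10 k).V → Bool :=
        Sym2.lift ⟨fun a b => decide (π a = i) != decide (π b = i), by
          intro a b
          by_cases h1 : π a = i <;> by_cases h2 : π b = i <;> simp [h1, h2]⟩ with hfe
      have h1 : w.darts.countP
            (fun d => decide (π d.toProd.1 = i) != decide (π d.toProd.2 = i))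
          = w.edges.countP fe := by
        show _ = (w.darts.map SimpleGraph.Dart.edge).countP fe
        rw [List.countP_map]
        apply List.countP_congr
        intro d _
        have hde : d.edge = s(d.toProd.1, d.toProd.2) := rfl
        simp only [Function.comp_apply, hde, hfe, Sym2.lift_mk]
      rw [h1, List.countP_eq_length_filter]
      set S : Set (Sym2 (ItP10 k).V) := {e | fe e = true ∧ e ∈ (ItP10 k).G.edgeSet} with hS
      haveI : Finite (Sym2 (ItP10 k).V) := Quot.finite _
      have hφex : ∀ e ∈ S, ∃ p : (ItP10 k).V × (ItP10 k).V, e = s(p.1, p.2) ∧ π p.1 = i := by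
        intro e he
        induction e using Sym2.ind with
        | _ a b =>
          obtain ⟨hfeab, _⟩ := he
          rw [hfe, Sym2.lift_mk] at hfeab
          have hfeab' : (decide (π a = i) != decide (π b = i)) = true := hfeab
          by_cases ha : π a = i
          · exact ⟨(a, b), rfl, ha⟩
          · have hda : decide (π a = i) = false := by simp [ha]
            rw [hda] at hfeab'
            have hb : π b = i := by
              by_contra hb
              have hdb : decide (π b = i) = false := by simp [hb]
              rw [hdb] at hfeab'
              simp at hfeab'
            exact ⟨(b, a), Sym2.eq_swap.symm, hb⟩
      set φ : Sym2 (ItP10 k).V → (ItP10 k).V × (ItP10 k).V := fun e =>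
        if h : ∃ p : (ItP10 k).V × (ItP10 k).V, e = s(p.1, p.2) ∧ π p.1 = i then h.choose else (v, v) with hφ
      have hφspec : ∀ e ∈ S, e = s((φ e).1, (φ e).2) ∧ π (φ e).1 = i := by
        intro e he
        have hex := hφex e he
        have : φ e = hex.choose := dif_pos hex
        rw [this]
        exact hex.choose_spec
      have hmaps : ∀ e ∈ S, φ e ∈ CD k i := by
        intro e he
        obtain ⟨he1, he2⟩ := hφspec e he
        obtain ⟨hfee, hees⟩ := he
        refine ⟨?_, he2, ?_⟩
        · rw [he1] at hees
          exact (SimpleGraph.mem_edgeSet _).1 hees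
        · rw [he1, hfe, Sym2.lift_mk] at hfee
          have hfee' : (decide (π (φ e).1 = i) != decide (π (φ e).2 = i)) = true := hfee
          have h5 : decide (π (φ e).1 = i) = true := by simp [he2]
          rw [h5] at hfee'
          show π (φ e).2 ≠ i
          intro hcontra
          have h6 : decide (π (φ e).2 = i) = true := by simp [hcontra]
          rw [h6] at hfee'
          simp at hfee'
      have hinj : Set.InjOn φ S := by
        intro e he e' he' heq
        rw [(hφspec e he).1, (hφspec e' he').1, heq]
      have hfin : (CD k i).Finite := CD_finite k i
      have hcard : S.ncard ≤ (CD k i).ncard :=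
        Set.ncard_le_ncard_of_injOn φ hmaps hinj hfin
      have hLS : ∀ e ∈ w.edges.filter fe, e ∈ S := by
        intro e hef
        rw [List.mem_filter] at hef
        exact ⟨hef.2, w.edges_subset_edgeSet hef.1⟩
      have hLnd : (w.edges.filter fe).Nodup :=
        (hw.isCircuit.isTrail.edges_nodup).filter _
      calc (w.edges.filter fe).length ≤ S.ncard :=
            nodup_length_le_ncard hLnd hLS (Set.toFinite S)
        _ ≤ (CD k i).ncard := hcard
        _ ≤ 3 := CD_card k i
    obtain ⟨c, hc⟩ := heven
    omega
  -- total number of base changes is 10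
  have hsum := sum_change_indicator (fun d : (ItP10 k).G.Dart => π d.toProd.1)
    (fun d => π d.toProd.2) w.darts
  have h20 : ∑ i : Fin 10, w.darts.countP
      (fun d => decide (π d.toProd.1 = i) != decide (π d.toProd.2 = i)) = 20 := by
    rw [Finset.sum_congr rfl (fun i _ => hcount2 i)]
    simp
  have h20' : (2 : ℕ) * w.darts.countP (fun d => decide (π d.toProd.1 ≠ π d.toProd.2)) = 20 := by
    rw [← hsum]
    exact h20
  have hm : w.darts.countP (fun d => decide (π d.toProd.1 ≠ π d.toProd.2)) = 10 := by omega
  -- the destuttered base sequence is a hamiltonian circuit of Petersen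
  have hdne : (List.map π w.support).destutter (· ≠ ·) ≠ [] := dWalk_ne_nil π w
  set d : List (Fin 10) := (List.map π w.support).destutter (· ≠ ·) with hd
  have hdlen : d.length = 11 := by
    rw [hd, dWalk_length π w, hm]
  have hdchain : d.Chain' Pet.Adj :=
    dWalk_chain' π Pet.Adj (fun a b hab hne => crossAdj k a b hab hne) w
  have hdlast : d.getLast hdne = π v := by
    have h := dWalk_getLast? π w
    rw [← hd, List.getLast?_eq_getLast hdne, Option.some_inj] at h
    exact h
  have hdhead : d.head hdne = π v := by
    have h := dWalk_head? π w
    rw [← hd, List.head?_eq_head hdne, Option.some_inj] at h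
    exact h
  have hdmem : ∀ i : Fin 10, i ∈ d := by
    intro i
    obtain ⟨x, hxs, hxi⟩ := hcon i
    have h := dWalk_mem π w hxs
    rw [← hd] at h
    rwa [hxi] at h
  set e : List (Fin 10) := d.dropLast with he
  have helen : e.length = 10 := by rw [he, List.length_dropLast, hdlen]
  have hene : e ≠ [] := by
    intro h
    rw [h] at helen
    simp at helen
  have hdec : e ++ [d.getLast hdne] = d := List.dropLast_concat_getLast hdne
  have hch2 : List.Chain' Pet.Adj (e ++ [d.getLast hdne]) := by rw [hdec]; exact hdchain
  obtain ⟨hche, -, hcr⟩ := List.isChain_append.1 hch2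
  have hehead : e.head hene = π v := by
    have h1 := dWalk_head? π w
    rw [← hd, ← hdec, List.head?_append, List.head?_eq_head hene] at h1
    simpa using h1
  have hclose : Pet.Adj (e.getLast hene) (e.head hene) := by
    have h := hcr (e.getLast hene) (by simp [List.getLast?_eq_getLast hene]) (d.getLast hdne)
      (by simp [Option.mem_def])
    rw [hdlast] at h
    rw [hehead]
    exact h
  have hemem : ∀ i : Fin 10, i ∈ e := by
    intro i
    have hid := hdmem i
    rw [← hdec] at hid
    rcases List.mem_append.1 hid with h | h
    · exact h
    · have : i = d.getLast hdne := by simpa using h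
      rw [this, hdlast, ← hehead]
      exact List.head_mem hene
  have hetf : e.toFinset = Finset.univ :=
    Finset.eq_univ_iff_forall.2 (fun i => List.mem_toFinset.2 (hemem i))
  have hend : e.Nodup := nodup_of_length_eq_card (by rw [hetf, helen]; simp)
  exact pet_not_ham e helen hend hche hene hclose
end

section
/- Let G be a 2-connected cubic graph with a minimal 3-edge cut E_0 whose one side is a copy of P = P_10 − z. Then for every f-matching M of G, at least one vertex of V(P) is not covered by M. -/
open SimpleGraph

section Aux

/-- Edge list of `Pgr` as a function. -/
def edgs : Fin 12 → Fin 9 × Fin 9 :=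
  ![(0,1),(1,2),(2,3),(3,4),(4,0),(0,5),(1,6),(2,7),(3,8),(5,7),(6,8),(8,5)]

instance pgrDec : DecidableRel Pgr.Adj := fun a b =>
  decidable_of_iff (a ≠ b ∧ ((a,b) ∈ pEdges ∨ (b,a) ∈ pEdges))
    (by rw [Pgr, SimpleGraph.fromRel_adj])

def degF (x : Fin 9) : ℕ := (Finset.univ.filter (fun w => Pgr.Adj x w)).card

lemma hdeg_pgr (x : Fin 9) : hdeg Pgr x = degF x := by
  rw [hdeg, Set.ncard_eq_toFinset_card', Set.toFinset_setOf]; rfl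

lemma F2 : ∀ x : Fin 9, (degF x ≤ 2 → x = 4 ∨ x = 6 ∨ x = 7) ∧
    ((x = 4 ∨ x = 6 ∨ x = 7) → degF x = 2) := by decide

lemma F3 : ∀ a b, Pgr.Adj a b ↔ ∃ i : Fin 12, edgs i = (a,b) ∨ edgs i = (b,a) := by decide

lemma F4 : ∀ i j : Fin 12, i ≠ j → s((edgs i).1, (edgs i).2) ≠ s((edgs j).1, (edgs j).2) := by decide

def Q5 (m : Fin 12 → Bool) (sm : Fin 9 → Bool) : Prop :=
  (Finset.univ.filter (fun x => sm x = true)).card % 2 = 1 ∧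
  (∀ x : Fin 9, sm x = true → (x = 4 ∨ x = 6 ∨ x = 7) →
      ∀ i : Fin 12, m i = true → (edgs i).1 ≠ x ∧ (edgs i).2 ≠ x) ∧
  (∀ x : Fin 9, sm x = true → ∀ j : Fin 12, m j = false →
      ((edgs j).1 = x → sm (edgs j).2 = true) ∧ ((edgs j).2 = x → sm (edgs j).1 = true))

def P5 (m : Fin 12 → Bool) : Prop :=
  (∀ i : Fin 12, m i = true → ∀ j : Fin 12, m j = true → i ≠ j →
      (edgs i).1 ≠ (edgs j).1 ∧ (edgs i).1 ≠ (edgs j).2 ∧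
      (edgs i).2 ≠ (edgs j).1 ∧ (edgs i).2 ≠ (edgs j).2) →
  (∀ v : Fin 9, (∀ i : Fin 12, m i = true → (edgs i).1 ≠ v ∧ (edgs i).2 ≠ v) →
      (v = 4 ∨ v = 6 ∨ v = 7)) →
  ∃ s0 s1 s2 s3 s4 s5 s6 s7 s8 : Bool, Q5 m ![s0,s1,s2,s3,s4,s5,s6,s7,s8]

set_option synthInstance.maxSize 1000 in
set_option synthInstance.maxHeartbeats 1000000 in
instance : DecidablePred P5 := fun m => by unfold P5 Q5; infer_instance

set_option maxRecDepth 100000 in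
set_option maxHeartbeats 4000000 in
theorem F5 : ∀ b0 b1 b2 b3 b4 b5 b6 b7 b8 b9 b10 b11 : Bool,
    P5 ![b0,b1,b2,b3,b4,b5,b6,b7,b8,b9,b10,b11] := by decide

lemma F5' (m : Fin 12 → Bool) : P5 m := by
  have h := F5 (m 0) (m 1) (m 2) (m 3) (m 4) (m 5) (m 6) (m 7) (m 8) (m 9) (m 10) (m 11)
  have hm : ![m 0, m 1, m 2, m 3, m 4, m 5, m 6, m 7, m 8, m 9, m 10, m 11] = m := by
    funext i; fin_cases i <;> rfl
  rwa [hm] at h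

lemma lemA {V : Type} [Fintype V] (H : SimpleGraph V)
    (heven : ∀ c : H.ConnectedComponent, Even c.supp.ncard)
    (T : Set V) (hcl : ∀ v ∈ T, ∀ w, H.Adj v w → w ∈ T)
    (hodd : Odd T.ncard) : False := by
  classical
  have hwalk : ∀ {a b : V} (_ : H.Walk a b), a ∈ T → b ∈ T := by
    intro a b p
    induction p with
    | nil => exact id
    | cons h q ih => exact fun ha => ih (hcl _ ha _ h)
  have hsupp : ∀ v ∈ T, ∀ u, H.connectedComponentMk u = H.connectedComponentMk v → u ∈ T := by
    intro v hv u hu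
    obtain ⟨p⟩ := (SimpleGraph.ConnectedComponent.exact hu).symm
    exact hwalk p hv
  set T' : Finset V := T.toFinset with hT'
  have hcard : T.ncard = T'.card := Set.ncard_eq_toFinset_card' T
  have hsum := Finset.card_eq_sum_card_image (H.connectedComponentMk) T'
  have heven' : Even T'.card := by
    rw [hsum]
    apply Finset.even_sum
    intro comp hcomp
    obtain ⟨v, hvT, hmk⟩ := Finset.mem_image.mp hcomp
    have hvT' : v ∈ T := Set.mem_toFinset.mp hvT
    have hfil : T'.filter (fun a => H.connectedComponentMk a = comp) = comp.supp.toFinset := by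
      ext u
      simp only [Finset.mem_filter, Set.mem_toFinset, SimpleGraph.ConnectedComponent.mem_supp_iff]
      constructor
      · exact fun h => h.2
      · intro h
        exact ⟨Set.mem_toFinset.mpr (hsupp v hvT' u (by rw [h, ← hmk])), h⟩
    rw [hfil, ← Set.ncard_eq_toFinset_card']
    exact heven comp
  rw [hcard] at hodd
  exact (Nat.not_even_iff_odd.mpr hodd) heven'

end Aux

/-- if one side of a minimal 3-edge cut `E₀` of a 2-connected cubic
graph `G` is a copy of `P = P₁₀ - z`, then for every `f`-matching `M` of `G` at
least one vertex of `V(P)` is not covered by `M`. -/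
theorem stmt_11 {V : Type} [Fintype V] (G : SimpleGraph V) (hG : IsCubic G)
    (h2 : TwoConnected G) (E0 : Set (Sym2 V)) (hE : IsMinEdgeCut G E0)
    (hcard : E0.ncard = 3) (c : (G.deleteEdges E0).ConnectedComponent)
    (hiso : Nonempty (((G.deleteEdges E0).induce c.supp) ≃g Pgr))
    (M : Set (Sym2 V)) (hM : IsFMatching G M) :
    ∃ v ∈ c.supp, ∀ e ∈ M, v ∉ e := by
  classical
  by_contra hcon
  push_neg at hcon
  obtain ⟨φ⟩ := hiso
  set H := G.deleteEdges M with hH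
  -- abbreviation for going back from Fin 9 to V
  set f : Fin 9 → V := fun y => ((φ.symm y : ↥c.supp) : V) with hfdef
  have hf_inj : Function.Injective f := fun a b h =>
    φ.symm.injective (Subtype.ext h)
  have hfmem : ∀ y : Fin 9, f y ∈ c.supp := fun y => (φ.symm y).2
  have hmem : ∀ (v : V) (hv : v ∈ c.supp), f (φ ⟨v, hv⟩) = v := by
    intro v hv
    simp only [hfdef, RelIso.symm_apply_apply]
  have hback : ∀ (y : Fin 9) (hv : f y ∈ c.supp), φ ⟨f y, hv⟩ = y := by
    intro y hv
    have : (⟨f y, hv⟩ : ↥c.supp) = φ.symm y := Subtype.ext rfl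
    rw [this, RelIso.apply_symm_apply]
  -- adjacency transfer
  have hadj : ∀ (a b : ↥c.supp), (G.deleteEdges E0).Adj ↑a ↑b ↔ Pgr.Adj (φ a) (φ b) := by
    intro a b
    rw [φ.map_adj_iff]
    simp [SimpleGraph.comap_adj]
  -- component closure
  have hcs : ∀ v ∈ c.supp, ∀ w, (G.deleteEdges E0).Adj v w → w ∈ c.supp := by
    intro v hv w h
    rw [SimpleGraph.ConnectedComponent.mem_supp_iff] at hv ⊢
    rw [← hv]
    exact SimpleGraph.ConnectedComponent.sound h.symm.reachable
  -- degree counting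
  have hkey : ∀ (v : V) (hv : v ∈ c.supp),
      degF (φ ⟨v, hv⟩) + {w | G.Adj v w ∧ s(v, w) ∈ E0}.ncard = 3 := by
    intro v hv
    have h3 := hG v
    rw [hdeg] at h3
    have hsplit : {w | G.Adj v w} =
        {w | (G.deleteEdges E0).Adj v w} ∪ {w | G.Adj v w ∧ s(v, w) ∈ E0} := by
      ext w
      simp only [Set.mem_setOf_eq, Set.mem_union, SimpleGraph.deleteEdges_adj]
      tauto
    have hdisj : Disjoint {w | (G.deleteEdges E0).Adj v w} {w | G.Adj v w ∧ s(v, w) ∈ E0} := by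
      rw [Set.disjoint_left]
      intro w hw1 hw2
      rw [Set.mem_setOf_eq, SimpleGraph.deleteEdges_adj] at hw1
      exact hw1.2 hw2.2
    have himg : {y | Pgr.Adj (φ ⟨v, hv⟩) y} =
        φ '' {w : ↥c.supp | (G.deleteEdges E0).Adj v ↑w} := by
      ext y
      constructor
      · intro hy
        refine ⟨φ.symm y, ?_, by simp⟩
        have : Pgr.Adj (φ ⟨v, hv⟩) (φ (φ.symm y)) := by rwa [RelIso.apply_symm_apply]
        exact (hadj ⟨v, hv⟩ (φ.symm y)).mpr this
      · rintro ⟨w, hw, rfl⟩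
        exact (hadj ⟨v, hv⟩ w).mp hw
    have himg2 : {w | (G.deleteEdges E0).Adj v w} =
        Subtype.val '' {w : ↥c.supp | (G.deleteEdges E0).Adj v ↑w} := by
      ext w
      constructor
      · intro hw
        exact ⟨⟨w, hcs v hv w hw⟩, hw, rfl⟩
      · rintro ⟨w', hw', rfl⟩
        exact hw'
    have hA : {w | (G.deleteEdges E0).Adj v w}.ncard = degF (φ ⟨v, hv⟩) := by
      rw [himg2, Set.ncard_image_of_injective _ Subtype.val_injective,
        ← Set.ncard_image_of_injective _ φ.injective, ← himg, ← hdeg_pgr]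
      rfl
    rw [hsplit, Set.ncard_union_eq hdisj, hA] at h3
    exact h3
  -- ports and uniqueness of cut edge at a port
  have hport : ∀ (v : V) (hv : v ∈ c.supp) (w : V), G.Adj v w → s(v, w) ∈ E0 →
      ((φ ⟨v, hv⟩ = 4 ∨ φ ⟨v, hv⟩ = 6 ∨ φ ⟨v, hv⟩ = 7) ∧
        ∀ w', G.Adj v w' → s(v, w') ∈ E0 → w' = w) := by
    intro v hv w hb hw
    have hk := hkey v hv
    have hpos : 0 < {w' | G.Adj v w' ∧ s(v, w') ∈ E0}.ncard :=
      (Set.ncard_pos (Set.toFinite _)).mpr ⟨w, hb, hw⟩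
    have hdeg2 : degF (φ ⟨v, hv⟩) ≤ 2 := by omega
    have hx := (F2 (φ ⟨v, hv⟩)).1 hdeg2
    have hdF : degF (φ ⟨v, hv⟩) = 2 := (F2 (φ ⟨v, hv⟩)).2 hx
    have hc1 : {w' | G.Adj v w' ∧ s(v, w') ∈ E0}.ncard = 1 := by omega
    obtain ⟨u, hu⟩ := Set.ncard_eq_one.mp hc1
    refine ⟨hx, fun w' hb' hw' => ?_⟩
    have h1 : w' ∈ ({u} : Set V) := hu ▸ (⟨hb', hw'⟩ : w' ∈ {w' | G.Adj v w' ∧ s(v, w') ∈ E0})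
    have h2 : w ∈ ({u} : Set V) := hu ▸ (⟨hb, hw⟩ : w ∈ {w' | G.Adj v w' ∧ s(v, w') ∈ E0})
    rw [Set.mem_singleton_iff] at h1 h2
    rw [h1, h2]
  -- the matching, transported to the edge indices of Pgr
  set mfun : Fin 12 → Bool :=
    fun i => if s(f (edgs i).1, f (edgs i).2) ∈ M then true else false with hmfun
  have hmf : ∀ i, mfun i = true ↔ s(f (edgs i).1, f (edgs i).2) ∈ M := by
    intro i
    simp [hmfun]
  -- covered transfer
  have hcovE : ∀ (v : V) (hv : v ∈ c.supp) (w : V), G.Adj v w → s(v, w) ∉ E0 → s(v, w) ∈ M →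
      ∃ i : Fin 12, mfun i = true ∧
        ((edgs i).1 = φ ⟨v, hv⟩ ∨ (edgs i).2 = φ ⟨v, hv⟩) := by
    intro v hv w hb hE0 hMvw
    have hDadj : (G.deleteEdges E0).Adj v w := SimpleGraph.deleteEdges_adj.mpr ⟨hb, hE0⟩
    have hw : w ∈ c.supp := hcs v hv w hDadj
    have hPadj : Pgr.Adj (φ ⟨v, hv⟩) (φ ⟨w, hw⟩) := (hadj ⟨v, hv⟩ ⟨w, hw⟩).mp hDadj
    obtain ⟨i, hi⟩ := (F3 _ _).mp hPadj
    refine ⟨i, ?_, ?_⟩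
    · rw [hmf]
      rcases hi with hi | hi <;> rw [hi] <;> simp only [hmem v hv, hmem w hw]
      · exact hMvw
      · rwa [Sym2.eq_swap]
    · rcases hi with hi | hi <;> rw [hi]
      · exact Or.inl rfl
      · exact Or.inr rfl
  -- matching uniqueness
  have hMu : ∀ (v : V) (e e' : Sym2 V), e ∈ M → e' ∈ M → v ∈ e → v ∈ e' → e = e' := by
    intro v e e' he he' hv hv'
    by_contra hne
    exact hM.1.2 e he e' he' hne v ⟨hv, hv'⟩
  -- hypothesis 1 of F5
  have hyp1 : ∀ i : Fin 12, mfun i = true → ∀ j : Fin 12, mfun j = true → i ≠ j →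
      (edgs i).1 ≠ (edgs j).1 ∧ (edgs i).1 ≠ (edgs j).2 ∧
      (edgs i).2 ≠ (edgs j).1 ∧ (edgs i).2 ≠ (edgs j).2 := by
    intro i hi j hj hne
    have hei := (hmf i).mp hi
    have hej := (hmf j).mp hj
    have hcontra : ∀ (x : Fin 9), ((edgs i).1 = x ∨ (edgs i).2 = x) →
        ((edgs j).1 = x ∨ (edgs j).2 = x) → False := by
      intro x hix hjx
      have hvi : f x ∈ s(f (edgs i).1, f (edgs i).2) := by
        rcases hix with h | h <;> rw [h]
        · exact Sym2.mem_mk_left _ _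
        · exact Sym2.mem_mk_right _ _
      have hvj : f x ∈ s(f (edgs j).1, f (edgs j).2) := by
        rcases hjx with h | h <;> rw [h]
        · exact Sym2.mem_mk_left _ _
        · exact Sym2.mem_mk_right _ _
      have heq := hMu (f x) _ _ hei hej hvi hvj
      have heq2 : Sym2.map f s((edgs i).1, (edgs i).2) = Sym2.map f s((edgs j).1, (edgs j).2) := by
        rw [Sym2.map_pair_eq, Sym2.map_pair_eq]
        exact heq
      exact F4 i j hne (Sym2.map.injective hf_inj heq2)
    refine ⟨?_, ?_, ?_, ?_⟩ <;> intro h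
    · exact hcontra (edgs j).1 (Or.inl h) (Or.inl rfl)
    · exact hcontra (edgs j).2 (Or.inl h) (Or.inr rfl)
    · exact hcontra (edgs j).1 (Or.inr h) (Or.inl rfl)
    · exact hcontra (edgs j).2 (Or.inr h) (Or.inr rfl)
  -- hypothesis 2 of F5
  have hyp2 : ∀ y : Fin 9, (∀ i : Fin 12, mfun i = true → (edgs i).1 ≠ y ∧ (edgs i).2 ≠ y) →
      (y = 4 ∨ y = 6 ∨ y = 7) := by
    intro y hy
    have hv : f y ∈ c.supp := hfmem y
    obtain ⟨e, heM, hve⟩ := hcon (f y) hv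
    obtain ⟨w, rfl⟩ := Sym2.mem_iff_exists.mp hve
    have hGadj : G.Adj (f y) w := (SimpleGraph.mem_edgeSet G).mp (hM.1.1 heM)
    by_cases hE0 : s(f y, w) ∈ E0
    · have := (hport (f y) hv w hGadj hE0).1
      rwa [hback y hv] at this
    · obtain ⟨i, hi, hix⟩ := hcovE (f y) hv w hGadj hE0 heM
      rw [hback y hv] at hix
      rcases hix with h | h
      · exact absurd h (hy i hi).1
      · exact absurd h (hy i hi).2
  -- apply the finite check
  obtain ⟨s0, s1, s2, s3, s4, s5, s6, s7, s8, hQ⟩ := F5' mfun hyp1 hyp2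
  set sm : Fin 9 → Bool := ![s0,s1,s2,s3,s4,s5,s6,s7,s8] with hsm
  obtain ⟨hQodd, hQports, hQclose⟩ := hQ
  -- the odd closed set in V
  set T : Set V := f '' {y | sm y = true} with hT
  have hOddT : Odd T.ncard := by
    rw [hT, Set.ncard_image_of_injective _ hf_inj, Set.ncard_eq_toFinset_card',
      Set.toFinset_setOf]
    exact Nat.odd_iff.mpr hQodd
  have hclT : ∀ v ∈ T, ∀ w, H.Adj v w → w ∈ T := by
    rintro v ⟨y, hy, rfl⟩ w hHadj
    rw [Set.mem_setOf_eq] at hy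
    have hv : f y ∈ c.supp := hfmem y
    rw [hH, SimpleGraph.deleteEdges_adj] at hHadj
    obtain ⟨hGadj, hnotM⟩ := hHadj
    by_cases hE0 : s(f y, w) ∈ E0
    · exfalso
      obtain ⟨hxport, huniq⟩ := hport (f y) hv w hGadj hE0
      rw [hback y hv] at hxport
      have hunc := hQports y hy hxport
      obtain ⟨e, heM, hve⟩ := hcon (f y) hv
      obtain ⟨u, rfl⟩ := Sym2.mem_iff_exists.mp hve
      have hGadju : G.Adj (f y) u := (SimpleGraph.mem_edgeSet G).mp (hM.1.1 heM)
      by_cases hE0u : s(f y, u) ∈ E0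
      · have := huniq u hGadju hE0u
        rw [this] at heM
        exact hnotM heM
      · obtain ⟨i, hi, hix⟩ := hcovE (f y) hv u hGadju hE0u heM
        rw [hback y hv] at hix
        rcases hix with h | h
        · exact (hunc i hi).1 h
        · exact (hunc i hi).2 h
    · have hDadj : (G.deleteEdges E0).Adj (f y) w :=
        SimpleGraph.deleteEdges_adj.mpr ⟨hGadj, hE0⟩
      have hw : w ∈ c.supp := hcs (f y) hv w hDadj
      have hPadj : Pgr.Adj y (φ ⟨w, hw⟩) := by
        have := (hadj ⟨f y, hv⟩ ⟨w, hw⟩).mp hDadj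
        rwa [hback y hv] at this
      obtain ⟨i, hi⟩ := (F3 _ _).mp hPadj
      have hiE : mfun i = false := by
        rcases Bool.eq_false_or_eq_true (mfun i) with h | h
        · exfalso
          have hmem' := (hmf i).mp h
          rcases hi with hi | hi <;> rw [hi] at hmem' <;>
            simp only [hmem w hw] at hmem'
          · exact hnotM hmem'
          · rw [Sym2.eq_swap] at hmem'
            exact hnotM hmem'
        · exact h
      rcases hi with hi | hi
      · have h2 : (edgs i).2 = φ ⟨w, hw⟩ := by rw [hi]
        have := (hQclose y hy i hiE).1 (by rw [hi])
        rw [h2] at this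
        exact ⟨φ ⟨w, hw⟩, this, hmem w hw⟩
      · have h2 : (edgs i).1 = φ ⟨w, hw⟩ := by rw [hi]
        have := (hQclose y hy i hiE).2 (by rw [hi])
        rw [h2] at this
        exact ⟨φ ⟨w, hw⟩, this, hmem w hw⟩
  exact lemA H (fun comp => (hM.2 comp).2) T hclT hOddT
end
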